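/- For every v_h ∈ V_h there exists w_h ∈ V_h such that |||w_h|||♯ ≤ (1 + 2 C_st) |||v_h|||♯ and b♯(v_h, w_h) ≥ (1 − c'_γ) |||v_h|||♯², where c'_γ := 2(γ_p + ρ⁻¹ γ_d / 2 + max(1, ρ⁻²) γ_div²). In particular, if c'_γ < 1, then the discrete inf-sup constant satisfies: inf over v_h ∈ V_h with |||v_h|||♯ = 1 of sup over w_h ∈ V_h with |||w_h|||♯ = 1 of |b♯(v_h, w_h)| is at least (1 − c'_γ)/(1 + 2 C_st). -/

import Mathlib

open scoped RealInnerProductSpace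

private lemma cs3 (a1 a2 a3 b1 b2 b3 : ℝ) (ha1 : 0 ≤ a1) (ha2 : 0 ≤ a2) (ha3 : 0 ≤ a3)
    (hb1 : 0 ≤ b1) (hb2 : 0 ≤ b2) (hb3 : 0 ≤ b3) :
    a1*b1 + a2*b2 + a3*b3 ≤
      Real.sqrt (a1^2 + a2^2 + a3^2) * Real.sqrt (b1^2 + b2^2 + b3^2) := by
  rw [← Real.sqrt_mul (by positivity)]
  rw [show (a1*b1 + a2*b2 + a3*b3) = Real.sqrt ((a1*b1 + a2*b2 + a3*b3)^2) from
    (Real.sqrt_sq (by positivity)).symm]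
  apply Real.sqrt_le_sqrt
  nlinarith [sq_nonneg (a1*b2 - a2*b1), sq_nonneg (a1*b3 - a3*b1), sq_nonneg (a2*b3 - a3*b2)]

private lemma cs2 (a1 a2 b1 b2 : ℝ) (ha1 : 0 ≤ a1) (ha2 : 0 ≤ a2)
    (hb1 : 0 ≤ b1) (hb2 : 0 ≤ b2) :
    a1*b1 + a2*b2 ≤ Real.sqrt (a1^2 + a2^2) * Real.sqrt (b1^2 + b2^2) := by
  rw [← Real.sqrt_mul (by positivity)]
  rw [show (a1*b1 + a2*b2) = Real.sqrt ((a1*b1 + a2*b2)^2) from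
    (Real.sqrt_sq (by positivity)).symm]
  apply Real.sqrt_le_sqrt
  nlinarith [sq_nonneg (a1*b2 - a2*b1)]

private lemma s_cs {L : Type*} [NormedAddCommGroup L] [InnerProductSpace ℝ L]
    (s : L →ₗ[ℝ] L →ₗ[ℝ] ℝ) (hs_symm : ∀ v w : L, s v w = s w v)
    (hs_pos : ∀ v : L, 0 ≤ s v v) (v w : L) :
    s v w ≤ Real.sqrt (s v v) * Real.sqrt (s w w) := by
  rcases le_or_gt (s v w) 0 with h | h
  · exact h.trans (by positivity)
  have key : ∀ t : ℝ, 0 ≤ s v v - 2 * t * s v w + t^2 * s w w := by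
    intro t
    have h0 := hs_pos (v - t • w)
    have : s (v - t • w) (v - t • w) = s v v - 2 * t * s v w + t^2 * s w w := by
      simp only [map_sub, map_smul, LinearMap.sub_apply, LinearMap.smul_apply, smul_eq_mul]
      rw [hs_symm w v]; ring
    linarith [this ▸ h0]
  rcases eq_or_lt_of_le (hs_pos w) with hw | hw
  · exfalso
    have h1 := key ((s v v + 1) / (2 * s v w))
    rw [← hw] at h1
    have h2 : 2 * ((s v v + 1) / (2 * s v w)) * s v w = s v v + 1 := by
      field_simp
    nlinarith
  · have hw' : s w w ≠ 0 := ne_of_gt hw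
    have hsq : (s v w)^2 ≤ s v v * s w w := by
      have e1 : (s v w / s w w) * s w w = s v w := div_mul_cancel₀ _ hw'
      nlinarith [key (s v w / s w w), mul_nonneg (key (s v w / s w w)) hw.le]
    rw [← Real.sqrt_mul (hs_pos v)]
    exact (Real.le_sqrt h.le (by nlinarith [hs_pos v])).2 hsq

/-- The energy norm `|||v||| := (ω²‖v‖_L² + ‖C v‖_M²)^{1/2}`. -/
noncomputable def tnorm {L M : Type*} [NormedAddCommGroup L] [InnerProductSpace ℝ L]
    [NormedAddCommGroup M] [InnerProductSpace ℝ M]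
    (ω : ℝ) (C : L →ₗ[ℝ] M) (v : L) : ℝ :=
  Real.sqrt (ω ^ 2 * ‖v‖ ^ 2 + ‖C v‖ ^ 2)

/-- The augmented energy norm `|||v|||♯ := (ω²‖v‖_L² + ‖C v‖_M² + s(v,v))^{1/2}`. -/
noncomputable def tnormS {L M : Type*} [NormedAddCommGroup L] [InnerProductSpace ℝ L]
    [NormedAddCommGroup M] [InnerProductSpace ℝ M]
    (ω : ℝ) (C : L →ₗ[ℝ] M) (s : L →ₗ[ℝ] L →ₗ[ℝ] ℝ) (v : L) : ℝ :=
  Real.sqrt (ω ^ 2 * ‖v‖ ^ 2 + ‖C v‖ ^ 2 + s v v)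

section Aux
variable {L M : Type*} [NormedAddCommGroup L] [InnerProductSpace ℝ L]
    [NormedAddCommGroup M] [InnerProductSpace ℝ M]
    (ω : ℝ) (C : L →ₗ[ℝ] M) (s : L →ₗ[ℝ] L →ₗ[ℝ] ℝ)

private lemma tnormS_nonneg (v : L) : 0 ≤ tnormS ω C s v := Real.sqrt_nonneg _

private lemma tnorm_nonneg (v : L) : 0 ≤ tnorm ω C v := Real.sqrt_nonneg _

private lemma tnorm_le_tnormS (hs_pos : ∀ v : L, 0 ≤ s v v) (v : L) :
    tnorm ω C v ≤ tnormS ω C s v :=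
  Real.sqrt_le_sqrt (by linarith [hs_pos v])

private lemma tnormS_sq (hs_pos : ∀ v : L, 0 ≤ s v v) (v : L) :
    tnormS ω C s v ^ 2 = ω ^ 2 * ‖v‖ ^ 2 + ‖C v‖ ^ 2 + s v v := by
  have h0 : (0:ℝ) ≤ ω ^ 2 * ‖v‖ ^ 2 + ‖C v‖ ^ 2 + s v v := by
    have := hs_pos v; positivity
  exact Real.sq_sqrt h0

private lemma s_abs_cs (hs_symm : ∀ v w : L, s v w = s w v)
    (hs_pos : ∀ v : L, 0 ≤ s v v) (v w : L) :
    |s v w| ≤ Real.sqrt (s v v) * Real.sqrt (s w w) := by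
  rw [abs_le]
  refine ⟨?_, s_cs s hs_symm hs_pos v w⟩
  have h := s_cs s hs_symm hs_pos (-v) w
  have e : s (-v) w = - s v w := by simp
  have e2 : s (-v) (-v) = s v v := by simp
  rw [e, e2] at h
  linarith

private lemma bS_cross (hs_symm : ∀ v w : L, s v w = s w v)
    (hs_pos : ∀ v : L, 0 ≤ s v v) (hω : 0 ≤ ω) (v w : L) :
    |(-ω ^ 2 * ⟪v, w⟫ + ⟪C v, C w⟫ + s v w)| ≤ tnormS ω C s v * tnormS ω C s w := by
  have h1 : ω^2 * |⟪v, w⟫| ≤ (ω*‖v‖) * (ω*‖w‖) := by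
    have := abs_real_inner_le_norm v w
    nlinarith [sq_nonneg ω]
  have h2 : |⟪C v, C w⟫| ≤ ‖C v‖ * ‖C w‖ := abs_real_inner_le_norm _ _
  have h3 := s_abs_cs s hs_symm hs_pos v w
  have key := cs3 (ω*‖v‖) ‖C v‖ (Real.sqrt (s v v)) (ω*‖w‖) ‖C w‖ (Real.sqrt (s w w))
    (by positivity) (norm_nonneg _) (Real.sqrt_nonneg _)
    (by positivity) (norm_nonneg _) (Real.sqrt_nonneg _)
  have ev : (ω*‖v‖)^2 + ‖C v‖^2 + Real.sqrt (s v v)^2 = ω^2*‖v‖^2 + ‖C v‖^2 + s v v := by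
    rw [Real.sq_sqrt (hs_pos v)]; ring
  have ew : (ω*‖w‖)^2 + ‖C w‖^2 + Real.sqrt (s w w)^2 = ω^2*‖w‖^2 + ‖C w‖^2 + s w w := by
    rw [Real.sq_sqrt (hs_pos w)]; ring
  rw [ev, ew] at key
  have habs : |(-ω ^ 2 * ⟪v, w⟫ + ⟪C v, C w⟫ + s v w)|
      ≤ ω^2 * |⟪v, w⟫| + |⟪C v, C w⟫| + |s v w| := by
    have e : |(-ω^2 * ⟪v,w⟫)| = ω^2 * |⟪v,w⟫| := by
      rw [abs_mul, abs_neg, abs_pow, abs_of_nonneg hω]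
    calc |(-ω ^ 2 * ⟪v, w⟫ + ⟪C v, C w⟫ + s v w)|
        ≤ |(-ω ^ 2 * ⟪v, w⟫)| + |⟪C v, C w⟫| + |s v w| :=
          (abs_add_le _ _).trans (by linarith [abs_add_le (-ω ^ 2 * ⟪v, w⟫) ⟪C v, C w⟫])
      _ = ω^2 * |⟪v, w⟫| + |⟪C v, C w⟫| + |s v w| := by rw [e]
  unfold tnormS
  calc |(-ω ^ 2 * ⟪v, w⟫ + ⟪C v, C w⟫ + s v w)|
      ≤ ω^2 * |⟪v, w⟫| + |⟪C v, C w⟫| + |s v w| := habs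
    _ ≤ (ω*‖v‖) * (ω*‖w‖) + ‖C v‖ * ‖C w‖ + Real.sqrt (s v v) * Real.sqrt (s w w) := by
        linarith
    _ ≤ _ := key

private lemma tnormS_add_le (hs_symm : ∀ v w : L, s v w = s w v)
    (hs_pos : ∀ v : L, 0 ≤ s v v) (hω : 0 ≤ ω) (v w : L) :
    tnormS ω C s (v + w) ≤ tnormS ω C s v + tnormS ω C s w := by
  have hcross : ω ^ 2 * ⟪v, w⟫ + ⟪C v, C w⟫ + s v w ≤ tnormS ω C s v * tnormS ω C s w := by
    have h1 : ω^2 * ⟪v, w⟫ ≤ (ω*‖v‖) * (ω*‖w‖) := by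
      have := real_inner_le_norm v w
      nlinarith [sq_nonneg ω]
    have h2 : ⟪C v, C w⟫ ≤ ‖C v‖ * ‖C w‖ := real_inner_le_norm _ _
    have h3 := s_cs s hs_symm hs_pos v w
    have key := cs3 (ω*‖v‖) ‖C v‖ (Real.sqrt (s v v)) (ω*‖w‖) ‖C w‖ (Real.sqrt (s w w))
      (by positivity) (norm_nonneg _) (Real.sqrt_nonneg _)
      (by positivity) (norm_nonneg _) (Real.sqrt_nonneg _)
    have ev : (ω*‖v‖)^2 + ‖C v‖^2 + Real.sqrt (s v v)^2 = ω^2*‖v‖^2 + ‖C v‖^2 + s v v := by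
      rw [Real.sq_sqrt (hs_pos v)]; ring
    have ew : (ω*‖w‖)^2 + ‖C w‖^2 + Real.sqrt (s w w)^2 = ω^2*‖w‖^2 + ‖C w‖^2 + s w w := by
      rw [Real.sq_sqrt (hs_pos w)]; ring
    rw [ev, ew] at key
    unfold tnormS
    linarith
  have hexp : ω ^ 2 * ‖v + w‖ ^ 2 + ‖C (v + w)‖ ^ 2 + s (v + w) (v + w)
      = (ω ^ 2 * ‖v‖ ^ 2 + ‖C v‖ ^ 2 + s v v) + (ω ^ 2 * ‖w‖ ^ 2 + ‖C w‖ ^ 2 + s w w)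
        + 2 * (ω ^ 2 * ⟪v, w⟫ + ⟪C v, C w⟫ + s v w) := by
    rw [map_add, @norm_add_sq_real L, @norm_add_sq_real M]
    simp only [map_add, LinearMap.add_apply]
    rw [hs_symm w v]; ring
  have hbound : ω ^ 2 * ‖v + w‖ ^ 2 + ‖C (v + w)‖ ^ 2 + s (v + w) (v + w)
      ≤ (tnormS ω C s v + tnormS ω C s w)^2 := by
    rw [hexp]
    have ev := tnormS_sq ω C s hs_pos v
    have ew := tnormS_sq ω C s hs_pos w
    nlinarith
  calc tnormS ω C s (v + w) ≤ Real.sqrt ((tnormS ω C s v + tnormS ω C s w)^2) :=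
        Real.sqrt_le_sqrt hbound
    _ = _ := Real.sqrt_sq (by unfold tnormS; positivity)

private lemma tnormS_smul (c : ℝ) (v : L) :
    tnormS ω C s (c • v) = |c| * tnormS ω C s v := by
  have h : ω ^ 2 * ‖c • v‖ ^ 2 + ‖C (c • v)‖ ^ 2 + s (c • v) (c • v)
      = c^2 * (ω ^ 2 * ‖v‖ ^ 2 + ‖C v‖ ^ 2 + s v v) := by
    rw [map_smul, norm_smul, norm_smul, map_smul, map_smul]
    simp only [LinearMap.smul_apply, smul_eq_mul, Real.norm_eq_abs]
    rw [mul_pow, mul_pow, sq_abs]; ring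
  unfold tnormS
  rw [h, Real.sqrt_mul (sq_nonneg c), Real.sqrt_sq_eq_abs]

end Aux
set_option maxHeartbeats 2000000 in
/-- **Discrete inf-sup stability.**
For every `v_h ∈ V_h` there exists `w_h ∈ V_h` with
`|||w_h|||♯ ≤ (1 + 2 C_st) |||v_h|||♯` and `b♯(v_h, w_h) ≥ (1 − c'_γ) |||v_h|||♯²`, where
`c'_γ := 2(γ_p + ρ⁻¹ γ_d / 2 + max(1, ρ⁻²) γ_div²)`. In particular, if `c'_γ < 1`, then
for every `v_h ∈ V_h` with `|||v_h|||♯ = 1`,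
`sup_{w_h ∈ V_h, |||w_h|||♯ = 1} |b♯(v_h, w_h)| ≥ (1 − c'_γ)/(1 + 2 C_st)`. -/
theorem discrete_inf_sup_stability
    {L M : Type*} [NormedAddCommGroup L] [InnerProductSpace ℝ L]
    [NormedAddCommGroup M] [InnerProductSpace ℝ M]
    (ω : ℝ) (hω : 0 < ω)
    (Vs V Vh : Submodule ℝ L) (hVVs : V ≤ Vs) (hVhVs : Vh ≤ Vs)
    (C : L →ₗ[ℝ] M)
    (s : L →ₗ[ℝ] L →ₗ[ℝ] ℝ)
    (hs_symm : ∀ v w : L, s v w = s w v)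
    (hs_pos : ∀ v : L, 0 ≤ s v v)
    (hs_conf : ∀ v w : L, v ∈ V ∨ w ∈ V → s v w = 0)
    (nc : L → ℝ)
    (hnc_nonneg : ∀ v : L, 0 ≤ nc v)
    (hnc_add : ∀ v w : L, nc (v + w) ≤ nc v + nc w)
    (hnc_smul : ∀ (c : ℝ) (v : L), nc (c • v) = |c| * nc v)
    (hnc_conf : ∀ v ∈ V, nc v = 0)
    (projK : L →ₗ[ℝ] L)
    (hprojK_mem : ∀ v : L, projK v ∈ V ∧ C (projK v) = 0)
    (hprojK_orth : ∀ v : L, ∀ w ∈ V, C w = 0 → ⟪v - projK v, w⟫ = 0)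
    (projKh : L →ₗ[ℝ] L)
    (hprojKh_mem : ∀ v : L, projKh v ∈ Vh ⊓ V ∧ C (projKh v) = 0)
    (hprojKh_orth : ∀ v : L, ∀ w ∈ Vh ⊓ V, C w = 0 → ⟪v - projKh v, w⟫ = 0)
    (γp γd Cst : ℝ) (hγp : 0 ≤ γp) (hγd : 0 ≤ γd) (hCst : 0 ≤ Cst)
    (hadj : ∀ θ : L, (∀ w ∈ V, C w = 0 → ⟪θ, w⟫ = 0) →
      ∃ ζ ∈ V, (∀ w ∈ V, -ω ^ 2 * ⟪w, ζ⟫ + ⟪C w, C ζ⟫ = ⟪w, θ⟫) ∧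
        ω * tnorm ω C ζ ≤ Cst * ‖θ‖ ∧
        sInf {t : ℝ | ∃ v ∈ Vh ⊓ V, t = ω * tnorm ω C (ζ - v)} ≤ γp * ‖θ‖ ∧
        ∀ wh ∈ Vh,
          ω * |⟪wh, θ⟫ - (-ω ^ 2 * ⟪wh, ζ⟫ + ⟪C wh, C ζ⟫ + s wh ζ)| ≤
            γd * ‖θ‖ * nc wh)
    (γdiv : ℝ) (hγdiv : 0 ≤ γdiv)
    (hdiv : ∀ vh ∈ Vh, projKh vh = 0 →
      ω * ‖projK vh‖ ≤ γdiv * Real.sqrt (‖C vh‖ ^ 2 + nc vh ^ 2))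
    (Pc : L →ₗ[ℝ] L)
    (hPc_mem : ∀ v ∈ V, Pc v ∈ Vh ⊓ V)
    (hPc_orth : ∀ v ∈ V, ∀ w ∈ Vh ⊓ V,
      ω ^ 2 * ⟪v - Pc v, w⟫ + ⟪C (v - Pc v), C w⟫ = 0)
    (ρ : ℝ) (hρ : 0 < ρ)
    (hρs : ∀ vh ∈ Vh, ρ * nc vh ≤ Real.sqrt (s vh vh)) :
    (∀ vh ∈ Vh, ∃ wh ∈ Vh,
      tnormS ω C s wh ≤ (1 + 2 * Cst) * tnormS ω C s vh ∧
      (1 - 2 * (γp + ρ⁻¹ * γd / 2 + max 1 (ρ⁻¹ ^ 2) * γdiv ^ 2)) *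
          (ω ^ 2 * ‖vh‖ ^ 2 + ‖C vh‖ ^ 2 + s vh vh) ≤
        -ω ^ 2 * ⟪vh, wh⟫ + ⟪C vh, C wh⟫ + s vh wh) ∧
    (2 * (γp + ρ⁻¹ * γd / 2 + max 1 (ρ⁻¹ ^ 2) * γdiv ^ 2) < 1 →
      ∀ vh ∈ Vh, tnormS ω C s vh = 1 →
        (1 - 2 * (γp + ρ⁻¹ * γd / 2 + max 1 (ρ⁻¹ ^ 2) * γdiv ^ 2)) / (1 + 2 * Cst) ≤
          sSup {t : ℝ | ∃ wh ∈ Vh, tnormS ω C s wh = 1 ∧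
            t = |(-ω ^ 2 * ⟪vh, wh⟫ + ⟪C vh, C wh⟫ + s vh wh)|}) := by
  have main : ∀ vh ∈ Vh, ∃ wh ∈ Vh,
      tnormS ω C s wh ≤ (1 + 2 * Cst) * tnormS ω C s vh ∧
      (1 - 2 * (γp + ρ⁻¹ * γd / 2 + max 1 (ρ⁻¹ ^ 2) * γdiv ^ 2)) *
          (ω ^ 2 * ‖vh‖ ^ 2 + ‖C vh‖ ^ 2 + s vh vh) ≤
        -ω ^ 2 * ⟪vh, wh⟫ + ⟪C vh, C wh⟫ + s vh wh := by
    intro vh hvh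
    obtain ⟨hpV, hCp⟩ := hprojKh_mem vh
    set p := projKh vh with hp
    rw [Submodule.mem_inf] at hpV
    obtain ⟨hpVh, hpV'⟩ := hpV
    have hpV : p ∈ Vh ⊓ V := Submodule.mem_inf.2 ⟨hpVh, hpV'⟩
    obtain ⟨hqV, hCq⟩ := hprojK_mem (vh - p)
    set q := projK (vh - p) with hq
    -- θ = vh - p - q is L²-orthogonal to K
    have hθorth : ∀ w ∈ V, C w = 0 → ⟪vh - p - q, w⟫ = 0 := by
      intro w hw hCw
      have h := hprojK_orth (vh - p) w hw hCw
      rw [← hq] at h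
      exact h
    obtain ⟨ζ, hζV, hbζ, hstζ, hinfζ, hconsζ⟩ := hadj _ hθorth
    have hζhm : Pc ζ ∈ Vh ⊓ V := hPc_mem ζ hζV
    set ζh := Pc ζ with hζh
    have hζhVh : ζh ∈ Vh := (Submodule.mem_inf.1 hζhm).1
    have hζhV : ζh ∈ V := (Submodule.mem_inf.1 hζhm).2
    -- basic inner-product identities
    have hvtp : ⟪vh - p, p⟫ = 0 := by
      have h := hprojKh_orth vh p hpV hCp
      rw [← hp] at h
      exact h
    have hθp : ⟪vh - p - q, p⟫ = 0 := hθorth p hpV' hCp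
    have hθq : ⟪vh - p - q, q⟫ = 0 := hθorth q hqV hCq
    have hnvh : ‖vh‖^2 = ‖vh - p‖^2 + ‖p‖^2 := by
      have e : vh = (vh - p) + p := by abel
      calc ‖vh‖^2 = ‖(vh - p) + p‖^2 := by rw [← e]
        _ = ‖vh - p‖^2 + 2*⟪vh - p, p⟫ + ‖p‖^2 := norm_add_sq_real _ _
        _ = ‖vh - p‖^2 + ‖p‖^2 := by rw [hvtp]; ring
    have hvtq : ⟪vh - p, q⟫ = ‖q‖^2 := by
      have h : ⟪vh - p - q, q⟫ = ⟪vh - p, q⟫ - ⟪q, q⟫ := inner_sub_left _ _ _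
      rw [hθq, real_inner_self_eq_norm_sq] at h
      linarith only [h]
    have hnθ : ‖vh - p - q‖^2 = ‖vh - p‖^2 - ‖q‖^2 := by
      calc ‖vh - p - q‖^2 = ‖vh - p‖^2 - 2*⟪vh - p, q⟫ + ‖q‖^2 := norm_sub_sq_real _ _
        _ = ‖vh - p‖^2 - ‖q‖^2 := by rw [hvtq]; ring
    -- ω‖θ‖ ≤ |||vh|||♯
    have hωθ : ω * ‖vh - p - q‖ ≤ tnormS ω C s vh := by
      have h1 : (ω * ‖vh - p - q‖)^2 ≤ ω^2*‖vh‖^2 + ‖C vh‖^2 + s vh vh := by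
        have h2 := hs_pos vh
        nlinarith only [h2, hnθ, hnvh, sq_nonneg ‖C vh‖,
          mul_nonneg (sq_nonneg ω) (sq_nonneg ‖q‖),
          mul_nonneg (sq_nonneg ω) (sq_nonneg ‖p‖)]
      calc ω * ‖vh - p - q‖ = Real.sqrt ((ω * ‖vh - p - q‖)^2) :=
            (Real.sqrt_sq (by positivity)).symm
        _ ≤ tnormS ω C s vh := by unfold tnormS; exact Real.sqrt_le_sqrt h1
    -- best-approximation properties of ζh = Pc ζ
    have horthζ : ∀ w ∈ Vh ⊓ V, ω ^ 2 * ⟪ζ - ζh, w⟫ + ⟪C (ζ - ζh), C w⟫ = 0 := by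
      intro w hw
      have h := hPc_orth ζ hζV w hw
      rw [← hζh] at h
      exact h
    have happrox : ω * tnorm ω C (ζ - ζh) ≤ γp * ‖vh - p - q‖ := by
      have hne : {t : ℝ | ∃ v ∈ Vh ⊓ V, t = ω * tnorm ω C (ζ - v)}.Nonempty :=
        ⟨ω * tnorm ω C (ζ - ζh), ⟨ζh, hζhm, rfl⟩⟩
      refine le_trans (le_csInf hne ?_) hinfζ
      rintro t ⟨v, hv, rfl⟩
      have key : tnorm ω C (ζ - ζh) ≤ tnorm ω C (ζ - v) := by
        have horth := horthζ (ζh - v) (Submodule.sub_mem _ hζhm hv)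
        unfold tnorm
        apply Real.sqrt_le_sqrt
        have e : ζ - v = (ζ - ζh) + (ζh - v) := by abel
        rw [e, map_add, norm_add_sq_real, norm_add_sq_real]
        nlinarith only [horth, mul_nonneg (sq_nonneg ω) (sq_nonneg ‖ζh - v‖), sq_nonneg ‖C (ζh - v)‖]
      exact mul_le_mul_of_nonneg_left key hω.le
    have hζhle : tnorm ω C ζh ≤ tnorm ω C ζ := by
      have horth := horthζ ζh hζhm
      unfold tnorm
      apply Real.sqrt_le_sqrt
      have e2 : ω ^ 2 * ‖ζ‖ ^ 2 + ‖C ζ‖ ^ 2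
          = ω^2*(‖ζ - ζh‖^2 + 2*⟪ζ - ζh, ζh⟫ + ‖ζh‖^2)
            + (‖C (ζ - ζh)‖^2 + 2*⟪C (ζ - ζh), C ζh⟫ + ‖C ζh‖^2) := by
        conv_lhs => rw [show ζ = (ζ - ζh) + ζh from (by abel)]
        rw [map_add, norm_add_sq_real, norm_add_sq_real]; try ring
      nlinarith only [e2, horth, mul_nonneg (sq_nonneg ω) (sq_nonneg ‖ζ - ζh‖), sq_nonneg ‖C (ζ - ζh)‖]
    -- the test function
    refine ⟨vh - (2:ℝ) • p + (2*ω^2) • ζh,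
      Submodule.add_mem _ (Submodule.sub_mem _ hvh (Submodule.smul_mem _ _ hpVh))
        (Submodule.smul_mem _ _ hζhVh), ?_, ?_⟩
    · -- norm bound
      have hvhp : ⟪vh, p⟫ = ‖p‖^2 := by
        have h : ⟪vh - p, p⟫ = ⟪vh, p⟫ - ⟪p, p⟫ := inner_sub_left _ _ _
        rw [hvtp, real_inner_self_eq_norm_sq] at h
        linarith only [h]
      have hA1 : tnormS ω C s (vh - (2:ℝ) • p) = tnormS ω C s vh := by
        unfold tnormS
        have hnp : ‖vh - (2:ℝ) • p‖^2 = ‖vh‖^2 := by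
          rw [norm_sub_sq_real, real_inner_smul_right, norm_smul, hvhp]
          simp [Real.norm_eq_abs]
          ring
        have hCp2 : C (vh - (2:ℝ) • p) = C vh := by
          rw [map_sub, map_smul, hCp, smul_zero, sub_zero]
        have hs2 : s (vh - (2:ℝ) • p) (vh - (2:ℝ) • p) = s vh vh := by
          simp only [map_sub, map_smul, LinearMap.sub_apply, LinearMap.smul_apply, smul_eq_mul]
          rw [hs_conf vh p (Or.inr hpV'), hs_conf p vh (Or.inl hpV'),
            hs_conf p p (Or.inl hpV')]
          ring
        rw [hnp, hCp2, hs2]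
      have htri := tnormS_add_le ω C s hs_symm hs_pos hω.le (vh - (2:ℝ) • p) ((2*ω^2) • ζh)
      have hζhs : tnormS ω C s ζh = tnorm ω C ζh := by
        unfold tnormS tnorm
        rw [hs_conf ζh ζh (Or.inl hζhV), add_zero]
      have h2 : tnormS ω C s ((2*ω^2) • ζh) = 2*ω^2 * tnorm ω C ζh := by
        rw [tnormS_smul, hζhs, abs_of_nonneg (by positivity)]
      have h3 : 2*ω^2 * tnorm ω C ζh ≤ 2*ω^2 * tnorm ω C ζ :=
        mul_le_mul_of_nonneg_left hζhle (by positivity)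
      have h4 : 2*ω * (ω * tnorm ω C ζ) ≤ 2*ω * (Cst * ‖vh - p - q‖) :=
        mul_le_mul_of_nonneg_left hstζ (by positivity)
      have h5 : 2*Cst * (ω * ‖vh - p - q‖) ≤ 2*Cst * tnormS ω C s vh :=
        mul_le_mul_of_nonneg_left hωθ (by positivity)
      calc tnormS ω C s (vh - (2:ℝ) • p + (2*ω^2) • ζh)
          ≤ tnormS ω C s (vh - (2:ℝ) • p) + tnormS ω C s ((2*ω^2) • ζh) := htri
        _ = tnormS ω C s vh + 2*ω^2 * tnorm ω C ζh := by rw [hA1, h2]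
        _ ≤ (1 + 2*Cst) * tnormS ω C s vh := by linarith only [h3, h4, h5]
    · -- coercivity bound
      have hvhp : ⟪vh, p⟫ = ‖p‖^2 := by
        have h : ⟪vh - p, p⟫ = ⟪vh, p⟫ - ⟪p, p⟫ := inner_sub_left _ _ _
        rw [hvtp, real_inner_self_eq_norm_sq] at h
        linarith only [h]
      have hsvp : s vh p = 0 := hs_conf vh p (Or.inr hpV')
      have hsvzh : s vh ζh = 0 := hs_conf vh ζh (Or.inr hζhV)
      have hsvz : s vh ζ = 0 := hs_conf vh ζ (Or.inr hζV)
      -- expansion of the bilinear form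
      have hexp : -ω ^ 2 * ⟪vh, vh - (2:ℝ) • p + (2*ω^2) • ζh⟫
            + ⟪C vh, C (vh - (2:ℝ) • p + (2*ω^2) • ζh)⟫
            + s vh (vh - (2:ℝ) • p + (2*ω^2) • ζh)
          = (-ω^2*‖vh‖^2 + ‖C vh‖^2 + s vh vh) + 2*ω^2*‖p‖^2
            + 2*ω^2*(-ω^2*⟪vh, ζh⟫ + ⟪C vh, C ζh⟫) := by
        simp only [map_add, map_sub, map_smul, inner_add_right, inner_sub_right,
          real_inner_smul_right, smul_eq_mul, hCp, inner_zero_right, hsvp, hsvzh,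
          hvhp, mul_zero, real_inner_self_eq_norm_sq]
        ring
      have hvθ : ⟪vh, vh - p - q⟫ = ‖vh - p‖^2 - ‖q‖^2 := by
        have h1 : ⟪p, vh - p - q⟫ = 0 := by rw [real_inner_comm]; exact hθp
        have h2 : ⟪vh, vh - p - q⟫ = ⟪vh - p, vh - p - q⟫ + ⟪p, vh - p - q⟫ := by
          rw [← inner_add_left, sub_add_cancel]
        rw [h2, h1, add_zero, inner_sub_right, real_inner_self_eq_norm_sq, hvtq]
      -- decomposition with the two error terms
      have hζhid : -ω^2*⟪vh, ζh⟫ + ⟪C vh, C ζh⟫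
          = (‖vh - p‖^2 - ‖q‖^2)
            - (⟪vh, vh - p - q⟫ - (-ω ^ 2 * ⟪vh, ζ⟫ + ⟪C vh, C ζ⟫ + s vh ζ))
            - (-ω^2*⟪vh, ζ - ζh⟫ + ⟪C vh, C (ζ - ζh)⟫) := by
        rw [← hvθ]
        simp only [inner_sub_right, map_sub]
        rw [hsvz]; ring
      have he1 := hconsζ vh hvh
      have hρinv : (0:ℝ) ≤ ρ⁻¹ := by positivity
      have hnc := hρs vh hvh
      have hsqs : Real.sqrt (s vh vh)^2 = s vh vh := Real.sq_sqrt (hs_pos vh)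
      have h2' : (ρ * nc vh)^2 ≤ s vh vh := by
        have hm := mul_le_mul hnc hnc (mul_nonneg hρ.le (hnc_nonneg vh)) (Real.sqrt_nonneg _)
        nlinarith only [hm, hsqs]
      have h5 : ρ⁻¹ * ρ = 1 := inv_mul_cancel₀ hρ.ne'
      -- Error term 1 (consistency)
      have hE1 : 2*ω^2*|⟪vh, vh - p - q⟫ - (-ω ^ 2 * ⟪vh, ζ⟫ + ⟪C vh, C ζ⟫ + s vh ζ)|
          ≤ ρ⁻¹ * γd * (ω^2*‖vh‖^2 + ‖C vh‖^2 + s vh vh) := by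
        have step0 : 2*ρ*(ω * ‖vh - p - q‖)*nc vh ≤ (ω * ‖vh - p - q‖)^2 + s vh vh := by
          nlinarith only [sq_nonneg (ω * ‖vh - p - q‖ - ρ * nc vh), h2']
        have step1 : 2 * (ω * ‖vh - p - q‖) * nc vh
            ≤ ρ⁻¹ * ((ω * ‖vh - p - q‖)^2 + s vh vh) := by
          have e : 2 * (ω * ‖vh - p - q‖) * nc vh
              = ρ⁻¹ * (2*ρ*(ω * ‖vh - p - q‖)*nc vh) := by
            rw [show ρ⁻¹ * (2*ρ*(ω * ‖vh - p - q‖)*nc vh)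
                = (ρ⁻¹*ρ) * (2*(ω * ‖vh - p - q‖)*nc vh) from by ring, h5, one_mul]
          rw [e]
          exact mul_le_mul_of_nonneg_left step0 hρinv
        have hθsmall : (ω * ‖vh - p - q‖)^2 ≤ ω^2*‖vh‖^2 := by
          have m1 : ω^2*‖vh - p - q‖^2 = ω^2*‖vh - p‖^2 - ω^2*‖q‖^2 := by rw [hnθ]; ring
          have m2 : ω^2*‖vh‖^2 = ω^2*‖vh - p‖^2 + ω^2*‖p‖^2 := by rw [hnvh]; ring
          linarith only [m1, m2, mul_nonneg (sq_nonneg ω) (sq_nonneg ‖q‖),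
            mul_nonneg (sq_nonneg ω) (sq_nonneg ‖p‖)]
        have c1 : 2*ω^2*|⟪vh, vh - p - q⟫ - (-ω ^ 2 * ⟪vh, ζ⟫ + ⟪C vh, C ζ⟫ + s vh ζ)|
            ≤ 2*ω*(γd * ‖vh - p - q‖ * nc vh) := by
          have h := mul_le_mul_of_nonneg_left he1 (by positivity : (0:ℝ) ≤ 2*ω)
          linarith only [h]
        have c3 : γd * (2*(ω*‖vh - p - q‖)*nc vh)
            ≤ γd * (ρ⁻¹*((ω*‖vh - p - q‖)^2 + s vh vh)) :=
          mul_le_mul_of_nonneg_left (by linarith only [step1]) hγd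
        have c4 : γd * ρ⁻¹ * (ω * ‖vh - p - q‖)^2 ≤ γd * ρ⁻¹ * (ω^2*‖vh‖^2) :=
          mul_le_mul_of_nonneg_left hθsmall (mul_nonneg hγd hρinv)
        have c5 : 0 ≤ γd * ρ⁻¹ * ‖C vh‖^2 :=
          mul_nonneg (mul_nonneg hγd hρinv) (sq_nonneg _)
        linarith only [c1, c3, c4, c5]
      -- Error term 2 (approximation)
      have he2b : |(-ω^2*⟪vh, ζ - ζh⟫ + ⟪C vh, C (ζ - ζh)⟫)|
          ≤ tnorm ω C vh * tnorm ω C (ζ - ζh) := by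
        have h1 : ω^2 * |⟪vh, ζ - ζh⟫| ≤ (ω*‖vh‖)*(ω*‖ζ - ζh‖) := by
          nlinarith only [abs_real_inner_le_norm vh (ζ - ζh), sq_nonneg ω]
        have h2 : |⟪C vh, C (ζ - ζh)⟫| ≤ ‖C vh‖*‖C (ζ - ζh)‖ := abs_real_inner_le_norm _ _
        have key := cs2 (ω*‖vh‖) ‖C vh‖ (ω*‖ζ - ζh‖) ‖C (ζ - ζh)‖
          (by positivity) (norm_nonneg _) (by positivity) (norm_nonneg _)
        rw [show (ω*‖vh‖)^2 + ‖C vh‖^2 = ω^2*‖vh‖^2 + ‖C vh‖^2 from by ring,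
          show (ω*‖ζ - ζh‖)^2 + ‖C (ζ - ζh)‖^2 = ω^2*‖ζ - ζh‖^2 + ‖C (ζ - ζh)‖^2
            from by ring] at key
        have habs : |(-ω^2*⟪vh, ζ - ζh⟫ + ⟪C vh, C (ζ - ζh)⟫)|
            ≤ ω^2 * |⟪vh, ζ - ζh⟫| + |⟪C vh, C (ζ - ζh)⟫| := by
          have e : |(-ω^2 * ⟪vh, ζ - ζh⟫)| = ω^2 * |⟪vh, ζ - ζh⟫| := by
            rw [abs_mul, abs_neg, abs_pow, abs_of_nonneg hω.le]
          calc |(-ω^2*⟪vh, ζ - ζh⟫ + ⟪C vh, C (ζ - ζh)⟫)|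
              ≤ |(-ω^2*⟪vh, ζ - ζh⟫)| + |⟪C vh, C (ζ - ζh)⟫| := abs_add_le _ _
            _ = _ := by rw [e]
        unfold tnorm
        linarith only [h1, h2, key, habs]
      have hE2 : 2*ω^2*|(-ω^2*⟪vh, ζ - ζh⟫ + ⟪C vh, C (ζ - ζh)⟫)|
          ≤ 2*γp*(ω^2*‖vh‖^2 + ‖C vh‖^2 + s vh vh) := by
        have ht0 : 0 ≤ tnorm ω C vh := tnorm_nonneg ω C vh
        have ht0' : 0 ≤ tnorm ω C (ζ - ζh) := tnorm_nonneg ω C (ζ - ζh)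
        have t1 : tnorm ω C vh ≤ tnormS ω C s vh := tnorm_le_tnormS ω C s hs_pos vh
        have c1 : 2*ω^2*|(-ω^2*⟪vh, ζ - ζh⟫ + ⟪C vh, C (ζ - ζh)⟫)|
            ≤ 2*ω^2*(tnorm ω C vh * tnorm ω C (ζ - ζh)) :=
          mul_le_mul_of_nonneg_left he2b (by positivity)
        have c3 : (2*ω*tnorm ω C vh)*(ω*tnorm ω C (ζ - ζh))
            ≤ (2*ω*tnorm ω C vh)*(γp*‖vh - p - q‖) :=
          mul_le_mul_of_nonneg_left happrox
            (mul_nonneg (by positivity) ht0)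
        have c5 : tnorm ω C vh*(ω*‖vh - p - q‖) ≤ tnormS ω C s vh * tnormS ω C s vh :=
          mul_le_mul t1 hωθ (by positivity) (tnormS_nonneg ω C s vh)
        have c6 : tnormS ω C s vh * tnormS ω C s vh = ω^2*‖vh‖^2 + ‖C vh‖^2 + s vh vh := by
          calc tnormS ω C s vh * tnormS ω C s vh = tnormS ω C s vh ^ 2 := by ring
            _ = _ := tnormS_sq ω C s hs_pos vh
        have c7 : (2*γp)*(tnorm ω C vh*(ω*‖vh - p - q‖))
            ≤ (2*γp)*(tnormS ω C s vh * tnormS ω C s vh) :=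
          mul_le_mul_of_nonneg_left c5 (by positivity)
        have c6' : (2*γp)*(tnormS ω C s vh * tnormS ω C s vh)
            = 2*γp*(ω^2*‖vh‖^2 + ‖C vh‖^2 + s vh vh) := by rw [c6]
        linarith only [c1, c3, c7, c6']
      -- the divergence term
      have hprojKh_p : projKh p = p := by
        obtain ⟨hppV, hCpp⟩ := hprojKh_mem p
        have h0 := hprojKh_orth p (p - projKh p) (Submodule.sub_mem _ hpV hppV)
          (by rw [map_sub, hCp, hCpp, sub_zero])
        have h1 : p - projKh p = 0 := by
          exact inner_self_eq_zero.mp h0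
        have := sub_eq_zero.mp h1
        exact this.symm
      have hprojKhvt : projKh (vh - p) = 0 := by
        rw [map_sub, ← hp, hprojKh_p, sub_self]
      have hCvt : C (vh - p) = C vh := by rw [map_sub, hCp, sub_zero]
      have hncvt : nc (vh - p) = nc vh := by
        have hncp : nc p = 0 := hnc_conf p hpV'
        have hnegp : nc (-p) = 0 := by
          have h := hnc_smul (-1) p
          rw [neg_one_smul] at h
          rw [h, hncp]; simp
        apply le_antisymm
        · calc nc (vh - p) = nc (vh + (-p)) := by rw [sub_eq_add_neg]
            _ ≤ nc vh + nc (-p) := hnc_add _ _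
            _ = nc vh := by rw [hnegp, add_zero]
        · calc nc vh = nc ((vh - p) + p) := by rw [sub_add_cancel]
            _ ≤ nc (vh - p) + nc p := hnc_add _ _
            _ = nc (vh - p) := by rw [hncp, add_zero]
      have hq2 := hdiv (vh - p) (Submodule.sub_mem _ hvh hpVh) hprojKhvt
      rw [← hq, hCvt, hncvt] at hq2
      have hq2sq : (ω*‖q‖)^2 ≤ γdiv^2*(‖C vh‖^2 + nc vh^2) := by
        have hX : Real.sqrt (‖C vh‖^2 + nc vh^2)^2 = ‖C vh‖^2 + nc vh^2 :=
          Real.sq_sqrt (by positivity)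
        have hm := mul_le_mul hq2 hq2 (mul_nonneg hω.le (norm_nonneg q))
          (mul_nonneg hγdiv (Real.sqrt_nonneg _))
        have hX2 : γdiv^2 * Real.sqrt (‖C vh‖^2 + nc vh^2)^2
            = γdiv^2 * (‖C vh‖^2 + nc vh^2) := by rw [hX]
        linarith only [hm, hX2]
      have hnc2 : nc vh^2 ≤ ρ⁻¹^2 * s vh vh := by
        have e : nc vh^2 = ρ⁻¹^2*(ρ*nc vh)^2 := by
          rw [show ρ⁻¹^2*(ρ*nc vh)^2 = (ρ⁻¹*ρ)^2 * nc vh^2 from by ring, h5, one_pow, one_mul]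
        rw [e]
        exact mul_le_mul_of_nonneg_left h2' (by positivity)
      have hmax1 : (1:ℝ) ≤ max 1 (ρ⁻¹^2) := le_max_left _ _
      have hmax2 : ρ⁻¹^2 ≤ max 1 (ρ⁻¹^2) := le_max_right _ _
      have hmax0 : (0:ℝ) ≤ max 1 (ρ⁻¹^2) := le_trans zero_le_one hmax1
      have hQb : 2*ω^2*‖q‖^2 ≤ 2*(max 1 (ρ⁻¹^2))*γdiv^2*(ω^2*‖vh‖^2 + ‖C vh‖^2 + s vh vh) := by
        have d1 : ‖C vh‖^2 + nc vh^2 ≤ (max 1 (ρ⁻¹^2))*(‖C vh‖^2 + s vh vh) := by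
          linarith only [hnc2,
            mul_nonneg (by linarith only [hmax1] : (0:ℝ) ≤ max 1 (ρ⁻¹^2) - 1) (sq_nonneg ‖C vh‖),
            mul_nonneg (by linarith only [hmax2] : (0:ℝ) ≤ max 1 (ρ⁻¹^2) - ρ⁻¹^2) (hs_pos vh)]
        have d2 : (2*γdiv^2)*(‖C vh‖^2 + nc vh^2)
            ≤ (2*γdiv^2)*((max 1 (ρ⁻¹^2))*(‖C vh‖^2 + s vh vh)) :=
          mul_le_mul_of_nonneg_left d1 (by positivity)
        have d3 : 0 ≤ (2*γdiv^2)*((max 1 (ρ⁻¹^2))*(ω^2*‖vh‖^2)) := by positivity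
        linarith only [hq2sq, d2, d3]
      -- put everything together
      rw [hexp, hζhid]
      have habs1 : 2*ω^2*(⟪vh, vh - p - q⟫ - (-ω ^ 2 * ⟪vh, ζ⟫ + ⟪C vh, C ζ⟫ + s vh ζ))
          ≤ 2*ω^2*|⟪vh, vh - p - q⟫ - (-ω ^ 2 * ⟪vh, ζ⟫ + ⟪C vh, C ζ⟫ + s vh ζ)| :=
        mul_le_mul_of_nonneg_left
          (le_abs_self (⟪vh, vh - p - q⟫ - (-ω ^ 2 * ⟪vh, ζ⟫ + ⟪C vh, C ζ⟫ + s vh ζ)))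
          (by positivity : (0:ℝ) ≤ 2*ω^2)
      have habs2 : 2*ω^2*(-ω^2*⟪vh, ζ - ζh⟫ + ⟪C vh, C (ζ - ζh)⟫)
          ≤ 2*ω^2*|(-ω^2*⟪vh, ζ - ζh⟫ + ⟪C vh, C (ζ - ζh)⟫)| :=
        mul_le_mul_of_nonneg_left
          (le_abs_self (-ω^2*⟪vh, ζ - ζh⟫ + ⟪C vh, C (ζ - ζh)⟫))
          (by positivity : (0:ℝ) ≤ 2*ω^2)
      have hnvh2 : ω^2*‖vh‖^2 = ω^2*‖vh - p‖^2 + ω^2*‖p‖^2 := by rw [hnvh]; ring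
      linarith only [hE1, hE2, hQb, habs1, habs2, hnvh2]
  refine ⟨main, ?_⟩
  intro hlt vh hvh hnorm
  obtain ⟨wh, hwhVh, hwA, hwB⟩ := main vh hvh
  have hQ1 : ω^2*‖vh‖^2 + ‖C vh‖^2 + s vh vh = 1 := by
    have h := tnormS_sq ω C s hs_pos vh
    rw [hnorm] at h
    rw [← h]; norm_num
  have hb : 1 - 2 * (γp + ρ⁻¹ * γd / 2 + max 1 (ρ⁻¹ ^ 2) * γdiv ^ 2)
      ≤ -ω ^ 2 * ⟪vh, wh⟫ + ⟪C vh, C wh⟫ + s vh wh := by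
    rw [hQ1, mul_one] at hwB
    exact hwB
  have hcpos : 0 < 1 - 2 * (γp + ρ⁻¹ * γd / 2 + max 1 (ρ⁻¹ ^ 2) * γdiv ^ 2) := by linarith only [hlt]
  have hτpos : 0 < tnormS ω C s wh := by
    rcases lt_or_eq_of_le (tnormS_nonneg ω C s wh) with h | h
    · exact h
    · exfalso
      have hcs := bS_cross ω C s hs_symm hs_pos hω.le vh wh
      rw [← h, mul_zero] at hcs
      have h2 := le_abs_self (-ω ^ 2 * ⟪vh, wh⟫ + ⟪C vh, C wh⟫ + s vh wh)
      linarith only [hcs, h2, hb, hcpos]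
  have hτle : tnormS ω C s wh ≤ 1 + 2*Cst := by
    rw [hnorm, mul_one] at hwA
    exact hwA
  have hnorm' : tnormS ω C s ((tnormS ω C s wh)⁻¹ • wh) = 1 := by
    rw [tnormS_smul, abs_of_nonneg (by positivity), inv_mul_cancel₀ hτpos.ne']
  have hbval : -ω ^ 2 * ⟪vh, (tnormS ω C s wh)⁻¹ • wh⟫
        + ⟪C vh, C ((tnormS ω C s wh)⁻¹ • wh)⟫ + s vh ((tnormS ω C s wh)⁻¹ • wh)
      = (tnormS ω C s wh)⁻¹ * (-ω ^ 2 * ⟪vh, wh⟫ + ⟪C vh, C wh⟫ + s vh wh) := by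
    rw [real_inner_smul_right, map_smul, real_inner_smul_right, map_smul]
    simp only [smul_eq_mul]
    ring
  have hBdd : BddAbove {t : ℝ | ∃ wh ∈ Vh, tnormS ω C s wh = 1 ∧
      t = |(-ω ^ 2 * ⟪vh, wh⟫ + ⟪C vh, C wh⟫ + s vh wh)|} := by
    refine ⟨1, ?_⟩
    rintro t ⟨w, hwVh2, hw1, rfl⟩
    have hcs := bS_cross ω C s hs_symm hs_pos hω.le vh w
    rw [hnorm, hw1, mul_one] at hcs
    exact hcs
  have hmem : |(-ω ^ 2 * ⟪vh, (tnormS ω C s wh)⁻¹ • wh⟫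
        + ⟪C vh, C ((tnormS ω C s wh)⁻¹ • wh)⟫ + s vh ((tnormS ω C s wh)⁻¹ • wh))|
      ∈ {t : ℝ | ∃ wh ∈ Vh, tnormS ω C s wh = 1 ∧
        t = |(-ω ^ 2 * ⟪vh, wh⟫ + ⟪C vh, C wh⟫ + s vh wh)|} :=
    ⟨(tnormS ω C s wh)⁻¹ • wh, Submodule.smul_mem _ _ hwhVh, hnorm', rfl⟩
  refine le_csSup_of_le hBdd hmem ?_
  rw [hbval]
  have h1 : (1 - 2 * (γp + ρ⁻¹ * γd / 2 + max 1 (ρ⁻¹ ^ 2) * γdiv ^ 2)) / (1 + 2*Cst)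
      ≤ (1 - 2 * (γp + ρ⁻¹ * γd / 2 + max 1 (ρ⁻¹ ^ 2) * γdiv ^ 2)) / (tnormS ω C s wh) := by
    gcongr
  have h2 : (1 - 2 * (γp + ρ⁻¹ * γd / 2 + max 1 (ρ⁻¹ ^ 2) * γdiv ^ 2)) / (tnormS ω C s wh)
      ≤ (tnormS ω C s wh)⁻¹ * (-ω ^ 2 * ⟪vh, wh⟫ + ⟪C vh, C wh⟫ + s vh wh) := by
    rw [div_eq_inv_mul]
    exact mul_le_mul_of_nonneg_left hb (inv_nonneg.mpr hτpos.le)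
  refine le_trans h1 (le_trans h2 (le_abs_self _))
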